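/- Let μ be a localizable measure (so that L₁(μ)* = L∞(μ)) and let x* be a norm-one functional on L₁(μ), represented by g ∈ L∞(μ) with ‖g‖∞ = 1, which does not attain its norm. Then the set {|g| = 1} is μ-null, and defining y*ₙ := (1/n)·g·χ_{{|g| ≤ 1 - 1/n}}, each y*ₙ satisfies |x*(f)| + |y*ₙ(f)| ≤ 1 for all f in the unit ball of L₁(μ), and n·y*ₙ converges to x* in the weak* topology. -/

import Mathlib

open MeasureTheory Filter

/-- for a localizable measure `μ` (here: `μ` is semifinite, which follows
from localizability) and `g ∈ L∞(μ)` with `‖g‖∞ = 1` representing a norm-one functional on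
`L₁(μ)` that does not attain its norm: the set `{|g| = 1}` is `μ`-null, the functionals
`yₙ = (1/n)·g·χ_{{|g| ≤ 1 - 1/n}}` satisfy `|x*(f)| + |yₙ(f)| ≤ 1` on the unit ball of
`L₁(μ)`, and `n·yₙ → x*` in the weak* topology. -/
theorem L1_nonattaining_functional_approximation
    {α : Type*} [MeasurableSpace α] (μ : Measure α)
    (hloc : ∀ A : Set α, MeasurableSet A → 0 < μ A →
      ∃ B ⊆ A, MeasurableSet B ∧ 0 < μ B ∧ μ B < ⊤)
    (g : α → ℝ) (hg : Measurable g)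
    (hbd : ∀ᵐ a ∂μ, |g a| ≤ 1) (hnorm : eLpNorm g ⊤ μ = 1)
    (hna : ∀ f : α → ℝ, Integrable f μ → (∫ a, |f a| ∂μ) ≤ 1 →
      |∫ a, f a * g a ∂μ| < 1) :
    μ {a | |g a| = 1} = 0 ∧
    (∀ n : ℕ, 0 < n → ∀ f : α → ℝ, Integrable f μ → (∫ a, |f a| ∂μ) ≤ 1 →
      |∫ a, f a * g a ∂μ| +
        |∫ a, f a * Set.indicator {x | |g x| ≤ 1 - 1 / (n : ℝ)}
          (fun x => (1 / (n : ℝ)) * g x) a ∂μ| ≤ 1) ∧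
    (∀ f : α → ℝ, Integrable f μ →
      Tendsto (fun n : ℕ => ∫ a, f a * ((n : ℝ) *
          Set.indicator {x | |g x| ≤ 1 - 1 / (n : ℝ)}
            (fun x => (1 / (n : ℝ)) * g x) a) ∂μ)
        atTop (nhds (∫ a, f a * g a ∂μ))) := by
  have hgm : Measurable fun a => |g a| := hg.abs
  have hAmeas : MeasurableSet {a | |g a| = 1} := hgm (measurableSet_singleton 1)
  have hSmeas : ∀ c : ℝ, MeasurableSet {x | |g x| ≤ c} := fun c => hgm measurableSet_Iic
  -- Part 1
  have h1 : μ {a | |g a| = 1} = 0 := by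
    by_contra h
    have hpos : 0 < μ {a | |g a| = 1} := pos_iff_ne_zero.mpr h
    obtain ⟨B, hBsub, hBmeas, hBpos, hBfin⟩ := hloc _ hAmeas hpos
    set c : ℝ := (μ B).toReal with hc
    have hcpos : 0 < c := ENNReal.toReal_pos hBpos.ne' hBfin.ne
    set f : α → ℝ := fun a => c⁻¹ * B.indicator (fun a => Real.sign (g a)) a with hf
    have hsgn : ∀ a ∈ B, Real.sign (g a) * g a = 1 := by
      intro a ha
      have hab : |g a| = 1 := hBsub ha
      rcases (abs_eq (by norm_num : (0:ℝ) ≤ 1)).mp hab with h' | h'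
      · rw [h', Real.sign_of_pos one_pos]; ring
      · rw [h', Real.sign_of_neg (by norm_num)]; ring
    have hsgnabs : ∀ a ∈ B, |Real.sign (g a)| = 1 := by
      intro a ha
      have hab : |g a| = 1 := hBsub ha
      rcases (abs_eq (by norm_num : (0:ℝ) ≤ 1)).mp hab with h' | h'
      · rw [h', Real.sign_of_pos one_pos]; norm_num
      · rw [h', Real.sign_of_neg (by norm_num)]; norm_num
    have hsm : Measurable fun a => Real.sign (g a) := by
      have heq : (fun a => Real.sign (g a)) =
          fun a => if g a < 0 then (-1:ℝ) else if 0 < g a then 1 else 0 := by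
        funext a; rw [Real.sign]
      rw [heq]
      exact Measurable.ite (measurableSet_lt hg measurable_const) measurable_const
        (Measurable.ite (measurableSet_lt measurable_const hg) measurable_const
          measurable_const)
    have hind_int : Integrable (B.indicator fun a => Real.sign (g a)) μ := by
      refine Integrable.mono' (g := B.indicator fun _ => (1:ℝ)) ?_ ?_ ?_
      · rw [integrable_indicator_iff hBmeas]
        exact integrableOn_const hBfin.ne
      · exact (hsm.indicator hBmeas).aestronglyMeasurable
      · refine Eventually.of_forall fun a => ?_
        by_cases ha : a ∈ B
        · simp [Set.indicator_of_mem ha, Real.norm_eq_abs, hsgnabs a ha]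
        · simp [Set.indicator_of_notMem ha]
    have hfint : Integrable f μ := hind_int.const_mul _
    have habs : (fun a => |f a|) = fun a => c⁻¹ * B.indicator (fun _ => (1:ℝ)) a := by
      funext a
      by_cases ha : a ∈ B
      · simp [hf, Set.indicator_of_mem ha, abs_mul, abs_of_nonneg (inv_nonneg.mpr hcpos.le),
          hsgnabs a ha]
      · simp [hf, Set.indicator_of_notMem ha]
    have hfabs : (∫ a, |f a| ∂μ) = 1 := by
      rw [habs, integral_const_mul]
      have : (∫ a, B.indicator (fun _ => (1:ℝ)) a ∂μ) = c := by
        rw [hc]; exact integral_indicator_one hBmeas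
      rw [this, inv_mul_cancel₀ hcpos.ne']
    have hmulg : (fun a => f a * g a) = fun a => c⁻¹ * B.indicator (fun _ => (1:ℝ)) a := by
      funext a
      by_cases ha : a ∈ B
      · simp [hf, Set.indicator_of_mem ha, mul_assoc, hsgn a ha]
      · simp [hf, Set.indicator_of_notMem ha]
    have hval : (∫ a, f a * g a ∂μ) = 1 := by
      rw [hmulg, integral_const_mul]
      have : (∫ a, B.indicator (fun _ => (1:ℝ)) a ∂μ) = c := by
        rw [hc]; exact integral_indicator_one hBmeas
      rw [this, inv_mul_cancel₀ hcpos.ne']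
    have := hna f hfint hfabs.le
    rw [hval] at this
    norm_num at this
  refine ⟨h1, ?_, ?_⟩
  -- Part 2
  · intro n hn f hfint hf1
    set S : Set α := {x | |g x| ≤ 1 - 1 / (n : ℝ)} with hSdef
    have hS : MeasurableSet S := hSmeas _
    have hn1 : (1 : ℝ) ≤ (n : ℝ) := by exact_mod_cast hn
    have hnpos : (0 : ℝ) < (n : ℝ) := by positivity
    have hfg_int : Integrable (fun a => f a * g a) μ := by
      refine Integrable.mono' (g := fun a => |f a|) hfint.abs
        (hfint.aestronglyMeasurable.mul hg.aestronglyMeasurable) ?_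
      filter_upwards [hbd] with a ha
      rw [Real.norm_eq_abs, abs_mul]
      calc |f a| * |g a| ≤ |f a| * 1 := by
            exact mul_le_mul_of_nonneg_left ha (abs_nonneg _)
        _ = |f a| := mul_one _
    have hi2_eq : ∀ a, f a * S.indicator (fun x => (1 / (n : ℝ)) * g x) a
        = (1 / (n : ℝ)) * (f a * S.indicator g a) := by
      intro a
      rw [Set.indicator_const_mul]; ring
    have hind_int : Integrable (fun a => f a * S.indicator g a) μ := by
      refine Integrable.mono' (g := fun a => |f a|) hfint.abs
        (hfint.aestronglyMeasurable.mul
          ((hg.indicator hS).aestronglyMeasurable)) ?_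
      filter_upwards [hbd] with a ha
      rw [Real.norm_eq_abs, abs_mul]
      by_cases haS : a ∈ S
      · rw [Set.indicator_of_mem haS]
        calc |f a| * |g a| ≤ |f a| * 1 := mul_le_mul_of_nonneg_left ha (abs_nonneg _)
          _ = |f a| := mul_one _
      · simp [Set.indicator_of_notMem haS, abs_nonneg]
    have hi2_int : Integrable
        (fun a => f a * S.indicator (fun x => (1 / (n : ℝ)) * g x) a) μ := by
      simp only [hi2_eq]
      exact (hind_int.const_mul _)
    -- the combined bound
    have key : (∫ a, |f a * g a| ∂μ) + (1 / (n : ℝ)) * (∫ a, |f a * S.indicator g a| ∂μ)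
        ≤ 1 := by
      have hsum_int : Integrable
          (fun a => |f a * g a| + (1 / (n : ℝ)) * |f a * S.indicator g a|) μ :=
        hfg_int.abs.add (hind_int.abs.const_mul _)
      have hmono : (∫ a, |f a * g a| + (1 / (n : ℝ)) * |f a * S.indicator g a| ∂μ)
          ≤ ∫ a, |f a| ∂μ := by
        refine integral_mono_ae hsum_int hfint.abs ?_
        filter_upwards [hbd] with a ha
        have hfa : (0:ℝ) ≤ |f a| := abs_nonneg _
        have hga : (0:ℝ) ≤ |g a| := abs_nonneg _
        by_cases haS : a ∈ S
        · have hgS : |g a| ≤ 1 - 1 / (n : ℝ) := haS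
          have h1n : 0 < 1 / (n : ℝ) := by positivity
          have h1n' : 1 / (n : ℝ) ≤ 1 := by
            rw [div_le_one hnpos]; exact hn1
          rw [Set.indicator_of_mem haS, abs_mul]
          nlinarith [mul_le_mul_of_nonneg_left hgS hfa,
            mul_le_mul_of_nonneg_left (mul_le_mul_of_nonneg_left hgS hfa) h1n.le,
            mul_nonneg (mul_nonneg hfa h1n.le) h1n.le]
        · rw [Set.indicator_of_notMem haS, abs_mul]
          simp only [mul_zero, abs_zero, add_zero]
          nlinarith [mul_le_mul_of_nonneg_left ha hfa]
      calc (∫ a, |f a * g a| ∂μ) + (1 / (n : ℝ)) * (∫ a, |f a * S.indicator g a| ∂μ)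
          = ∫ a, |f a * g a| + (1 / (n : ℝ)) * |f a * S.indicator g a| ∂μ := by
            rw [integral_add hfg_int.abs (hind_int.abs.const_mul _), integral_const_mul]
        _ ≤ ∫ a, |f a| ∂μ := hmono
        _ ≤ 1 := hf1
    have e1 : |∫ a, f a * g a ∂μ| ≤ ∫ a, |f a * g a| ∂μ := by
      simpa only [Real.norm_eq_abs] using
        norm_integral_le_integral_norm (μ := μ) (fun a => f a * g a)
    have e2 : |∫ a, f a * S.indicator (fun x => (1 / (n : ℝ)) * g x) a ∂μ|
        ≤ (1 / (n : ℝ)) * (∫ a, |f a * S.indicator g a| ∂μ) := by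
      have : (∫ a, f a * S.indicator (fun x => (1 / (n : ℝ)) * g x) a ∂μ)
          = (1 / (n : ℝ)) * ∫ a, f a * S.indicator g a ∂μ := by
        simp only [hi2_eq]; rw [integral_const_mul]
      rw [this, abs_mul, abs_of_nonneg (by positivity : (0:ℝ) ≤ 1 / (n:ℝ))]
      refine mul_le_mul_of_nonneg_left ?_ (by positivity)
      simpa only [Real.norm_eq_abs] using
        norm_integral_le_integral_norm (μ := μ) (fun a => f a * S.indicator g a)
    linarith
  -- Part 3
  · intro f hfint
    set F : ℕ → α → ℝ := fun n a => f a * ((n : ℝ) *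
      Set.indicator {x | |g x| ≤ 1 - 1 / (n : ℝ)} (fun x => (1 / (n : ℝ)) * g x) a) with hF
    have hFm : ∀ n : ℕ, AEStronglyMeasurable (F n) μ := by
      intro n
      exact hfint.aestronglyMeasurable.mul
        ((measurable_const.mul
          ((hg.const_mul _).indicator (hSmeas _))).aestronglyMeasurable)
    have hbound : ∀ n : ℕ, ∀ᵐ a ∂μ, ‖F n a‖ ≤ |f a| := by
      intro n
      filter_upwards [hbd] with a ha
      rw [Real.norm_eq_abs, hF]
      simp only
      rw [abs_mul]
      have hind : |(n : ℝ) * Set.indicator {x | |g x| ≤ 1 - 1 / (n : ℝ)}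
          (fun x => (1 / (n : ℝ)) * g x) a| ≤ 1 := by
        by_cases haS : a ∈ {x | |g x| ≤ 1 - 1 / (n : ℝ)}
        · rw [Set.indicator_of_mem haS]
          rcases Nat.eq_zero_or_pos n with h0 | hpos
          · simp [h0]
          · have hnne : (n : ℝ) ≠ 0 := by positivity
            have : (n : ℝ) * (1 / (n : ℝ) * g a) = g a := by
              field_simp
            rw [this]
            exact ha
        · rw [Set.indicator_of_notMem haS]
          simp
      calc |f a| * _ ≤ |f a| * 1 := mul_le_mul_of_nonneg_left hind (abs_nonneg _)
        _ = |f a| := mul_one _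
    have hlim : ∀ᵐ a ∂μ, Tendsto (fun n => F n a) atTop (nhds (f a * g a)) := by
      have hcompl : ∀ᵐ a ∂μ, ¬ (|g a| = 1) := by
        rw [ae_iff]
        simpa using h1
      filter_upwards [hbd, hcompl] with a ha hne
      have hlt : |g a| < 1 := lt_of_le_of_ne ha hne
      obtain ⟨N, hN⟩ := exists_nat_one_div_lt (sub_pos.mpr hlt)
      refine Tendsto.congr' ?_ tendsto_const_nhds
      rw [EventuallyEq, eventually_atTop]
      refine ⟨N + 1, fun n hnN => ?_⟩
      have hnpos : 0 < n := lt_of_lt_of_le (Nat.succ_pos N) hnN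
      have hnR : (0:ℝ) < (n : ℝ) := by exact_mod_cast hnpos
      have hdiv : 1 / (n : ℝ) ≤ 1 / ((N : ℝ) + 1) := by
        apply div_le_div_of_nonneg_left one_pos.le (by positivity)
        exact_mod_cast hnN
      have haS : a ∈ {x | |g x| ≤ 1 - 1 / (n : ℝ)} := by
        have : 1 / (n : ℝ) < 1 - |g a| := lt_of_le_of_lt hdiv hN
        simp only [Set.mem_setOf_eq]
        linarith
      rw [hF]
      simp only
      rw [Set.indicator_of_mem haS]
      have : (n : ℝ) * (1 / (n : ℝ) * g a) = g a := by
        field_simp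
      rw [this]
    exact tendsto_integral_of_dominated_convergence (fun a => |f a|) hFm hfint.abs hbound hlim
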